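/- arXiv:1504.03623 — 2 statements merged into one kernel-verified Lean document; each statement's English description precedes it below -/
import Mathlib

section
/- PCS[O] \ PCS[T] ≠ ∅; that is, there is an indexed family that is PCS[O]-learnable but not PCS[T]-learnable. -/
/-!
Common framework: indexed families of c.e. sets, enumerations (texts),
learning machines with run-time, membership-oracle machines, teachers,
and the learning criteria PRT/PSD/PMC/PCS with oracle/teacher variants.
-/

namespace TeachLearn

attribute [local instance] Classical.propDecidable

/-- The initial segment (finite string) of length `n` of the infinite sequence `f`. -/
def str (f : ℕ → ℕ) (n : ℕ) : List ℕ := (List.range n).map f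

/-- `f` is an enumeration (a text) of the set `A`: its set of values is exactly `A`. -/
def IsEnum (f : ℕ → ℕ) (A : Set ℕ) : Prop := Set.range f = A

/-- An indexed family: a uniformly computably enumerable sequence of nonempty
subsets of `ℕ`. -/
structure IndexedFamily where
  F : ℕ → Set ℕ
  nonempty : ∀ n, (F n).Nonempty
  uce : REPred fun p : ℕ × ℕ => p.1 ∈ F p.2

namespace IndexedFamily

/-- `A` is a member of the indexed family `𝓕`. -/
def Mem (𝓕 : IndexedFamily) (A : Set ℕ) : Prop := ∃ n, 𝓕.F n = A

/-- The minimal index of `A` in the indexed family `𝓕`. -/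
noncomputable def mi (𝓕 : IndexedFamily) (A : Set ℕ) : ℕ := sInf {n | 𝓕.F n = A}

end IndexedFamily

/-- A learning machine: a partial computable map from finite strings to
hypotheses, together with a (cumulative) run-time function.  The run-time is
defined exactly when the machine halts, dominates the length of the input read
as well as the size of the output produced, and is monotone along prefixes
(time is accumulated while reading an enumeration). -/
structure Machine where
  eval : List ℕ →. ℕ
  partrec : Partrec eval
  time : List ℕ →. ℕ
  time_dom : ∀ σ, (time σ).Dom ↔ (eval σ).Dom
  length_le_time : ∀ ⦃σ t⦄, t ∈ time σ → σ.length ≤ t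
  size_le_time : ∀ ⦃σ t h⦄, t ∈ time σ → h ∈ eval σ → Nat.size h ≤ t
  time_mono : ∀ ⦃σ τ s t⦄, σ <+: τ → s ∈ time σ → t ∈ time τ → s ≤ t

/-- A teacher: a computable, prefix-monotone map on finite strings whose
output consists of elements of its input. -/
structure Teacher where
  t : List ℕ → List ℕ
  computable : Computable t
  mono : ∀ ⦃σ τ⦄, σ <+: τ → t σ <+: t τ
  content_sub : ∀ ⦃σ x⦄, x ∈ t σ → x ∈ σ

/-- A learning machine with access to a membership oracle, modeled
interactively: `step (σ, ans)` is the machine's action on input string `σ`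
after having received the list `ans` of oracle answers so far; an even value
`2 * q` asks the oracle whether `q` belongs to the target, while an odd value
`2 * h + 1` halts the interaction with hypothesis `h`.  The run-time dominates
the length of the input read, the number of oracle queries asked, and the size
of the value produced, and is monotone (cumulative). -/
structure OMachine where
  step : List ℕ × List Bool →. ℕ
  partrec : Partrec step
  time : List ℕ × List Bool →. ℕ
  time_dom : ∀ x, (time x).Dom ↔ (step x).Dom
  length_le_time : ∀ ⦃x t⦄, t ∈ time x → x.1.length ≤ t
  queries_le_time : ∀ ⦃x t⦄, t ∈ time x → x.2.length ≤ t
  size_le_time : ∀ ⦃x t v⦄, t ∈ time x → v ∈ step x → Nat.size v ≤ t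
  time_mono : ∀ ⦃σ τ a b s t⦄, σ <+: τ → a <+: b →
    s ∈ time (σ, a) → t ∈ time (τ, b) → s ≤ t

namespace OMachine

/-- The answer lists reachable in the interaction of the machine `M` with the
membership oracle for `A` on the input string `σ`. -/
inductive Reach (M : OMachine) (A : Set ℕ) (σ : List ℕ) : List Bool → Prop
  | nil : Reach M A σ []
  | query {ans q} : Reach M A σ ans → (2 * q) ∈ M.step (σ, ans) →
      Reach M A σ (ans ++ [decide (q ∈ A)])

/-- `M.Out A σ h ans`: on input `σ`, interacting with the membership oracle
for `A`, the machine `M` receives the oracle answers `ans` and halts with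
hypothesis `h`. -/
def Out (M : OMachine) (A : Set ℕ) (σ : List ℕ) (h : ℕ) (ans : List Bool) : Prop :=
  M.Reach A σ ans ∧ (2 * h + 1) ∈ M.step (σ, ans)

/-- With oracle `A`, on the stage inputs `I`, the machine `M` outputs the
hypothesis `h` from stage `n` onwards. -/
def Settles (M : OMachine) (A : Set ℕ) (I : ℕ → List ℕ) (h n : ℕ) : Prop :=
  ∀ m, n ≤ m → ∃ ans, M.Out A (I m) h ans

end OMachine

/-- A teacher for the teacher-and-oracle model: it additionally has access to
the oracle answers received so far by the learner. -/
structure OTeacher where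
  t : List ℕ → List Bool → List ℕ
  computable : Computable₂ t
  mono : ∀ ⦃σ τ a b⦄, σ <+: τ → a <+: b → t σ a <+: t τ b
  content_sub : ∀ ⦃σ a x⦄, x ∈ t σ a → x ∈ σ

/-- On the stage inputs `I`, the machine `M` outputs the hypothesis `h` from
stage `n` onwards. -/
def Machine.Settles (M : Machine) (I : ℕ → List ℕ) (h n : ℕ) : Prop :=
  ∀ m, n ≤ m → M.eval (I m) = Part.some h

/-- Settling for the teacher-and-oracle model: `hist m` records the oracle
answers the learner received at stage `m - 1`, which the teacher sees at
stage `m`.  From stage `n` on, the learner outputs `h`. -/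
def OMachine.TOSettles (M : OMachine) (T : OTeacher) (A : Set ℕ) (f : ℕ → ℕ)
    (hist : ℕ → List Bool) (h n : ℕ) : Prop :=
  ∀ m, n ≤ m → M.Out A (T.t (str f m) (hist m)) h (hist (m + 1))

/-! ### Polynomial run-time (PRT) -/

/-- `M` converges to the hypothesis `h` on the stage inputs `I` within fewer
than `B` computation steps. -/
def Machine.PRTIdentifies (M : Machine) (I : ℕ → List ℕ) (h B : ℕ) : Prop :=
  ∃ n, M.Settles I h n ∧ ∃ t, t ∈ M.time (I n) ∧ t < B

/-- Oracle version of `Machine.PRTIdentifies`; the run-time bound also bounds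
the oracle use (by `queries_le_time`). -/
def OMachine.PRTIdentifies (M : OMachine) (A : Set ℕ) (I : ℕ → List ℕ) (h B : ℕ) : Prop :=
  ∃ n, M.Settles A I h n ∧
    ∃ ans t, M.Out A (I n) h ans ∧ t ∈ M.time (I n, ans) ∧ t < B

/-- `M` PRT-learns `𝓕` with polynomial bound `p`. -/
def PRTLearnsWith (M : Machine) (p : Polynomial ℕ) (𝓕 : IndexedFamily) : Prop :=
  ∀ A, 𝓕.Mem A → ∀ f, IsEnum f A →
    ∃ h, 𝓕.F h = A ∧ M.PRTIdentifies (str f) h (p.eval (𝓕.mi A))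

/-- `𝓕` is PRT-learnable. -/
def PRT (𝓕 : IndexedFamily) : Prop := ∃ M p, PRTLearnsWith M p 𝓕

/-- The learner-teacher pair `(M, T)` PRT-learns `𝓕` with polynomial bound `p`. -/
def PRTTLearnsWith (M : Machine) (T : Teacher) (p : Polynomial ℕ) (𝓕 : IndexedFamily) : Prop :=
  ∀ A, 𝓕.Mem A → ∀ f, IsEnum f A →
    ∃ h, 𝓕.F h = A ∧ M.PRTIdentifies (fun m => T.t (str f m)) h (p.eval (𝓕.mi A))

/-- `𝓕` is PRT[T]-learnable. -/
def PRTT (𝓕 : IndexedFamily) : Prop := ∃ M T p, PRTTLearnsWith M T p 𝓕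

/-- `𝓕` is PRT[O]-learnable. -/
def PRTO (𝓕 : IndexedFamily) : Prop :=
  ∃ (M : OMachine) (p : Polynomial ℕ), ∀ A, 𝓕.Mem A → ∀ f, IsEnum f A →
    ∃ h, 𝓕.F h = A ∧ M.PRTIdentifies A (str f) h (p.eval (𝓕.mi A))

/-- `𝓕` is PRT[T,O]-learnable. -/
def PRTTO (𝓕 : IndexedFamily) : Prop :=
  ∃ (M : OMachine) (T : OTeacher) (p : Polynomial ℕ),
    ∀ A, 𝓕.Mem A → ∀ f, IsEnum f A →
      ∃ h, 𝓕.F h = A ∧ ∃ hist : ℕ → List Bool, hist 0 = [] ∧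
        ∃ n, M.TOSettles T A f hist h n ∧
          ∃ t, t ∈ M.time (T.t (str f n) (hist n), hist (n + 1)) ∧ t < p.eval (𝓕.mi A)

/-! ### Polynomial size dataset (PSD) -/

/-- `M` converges to `h` on an initial stage whose input contains fewer than
`B` distinct elements. -/
def Machine.PSDIdentifies (M : Machine) (I : ℕ → List ℕ) (h B : ℕ) : Prop :=
  ∃ n, M.Settles I h n ∧ (I n).toFinset.card < B

/-- Oracle version of `Machine.PSDIdentifies`; the oracle use is also bounded. -/
def OMachine.PSDIdentifies (M : OMachine) (A : Set ℕ) (I : ℕ → List ℕ) (h B : ℕ) : Prop :=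
  ∃ n, M.Settles A I h n ∧ (I n).toFinset.card < B ∧
    ∃ ans, M.Out A (I n) h ans ∧ ans.length ≤ B

/-- `𝓕` is PSD-learnable. -/
def PSD (𝓕 : IndexedFamily) : Prop :=
  ∃ (M : Machine) (p : Polynomial ℕ), ∀ A, 𝓕.Mem A → ∀ f, IsEnum f A →
    ∃ h, 𝓕.F h = A ∧ M.PSDIdentifies (str f) h (p.eval (𝓕.mi A))

/-- `𝓕` is PSD[T]-learnable. -/
def PSDT (𝓕 : IndexedFamily) : Prop :=
  ∃ (M : Machine) (T : Teacher) (p : Polynomial ℕ), ∀ A, 𝓕.Mem A → ∀ f, IsEnum f A →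
    ∃ h, 𝓕.F h = A ∧ M.PSDIdentifies (fun m => T.t (str f m)) h (p.eval (𝓕.mi A))

/-- `𝓕` is PSD[O]-learnable. -/
def PSDO (𝓕 : IndexedFamily) : Prop :=
  ∃ (M : OMachine) (p : Polynomial ℕ), ∀ A, 𝓕.Mem A → ∀ f, IsEnum f A →
    ∃ h, 𝓕.F h = A ∧ M.PSDIdentifies A (str f) h (p.eval (𝓕.mi A))

/-- `𝓕` is PSD[T,O]-learnable. -/
def PSDTO (𝓕 : IndexedFamily) : Prop :=
  ∃ (M : OMachine) (T : OTeacher) (p : Polynomial ℕ),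
    ∀ A, 𝓕.Mem A → ∀ f, IsEnum f A →
      ∃ h, 𝓕.F h = A ∧ ∃ hist : ℕ → List Bool, hist 0 = [] ∧
        ∃ n, M.TOSettles T A f hist h n ∧
          (T.t (str f n) (hist n)).toFinset.card < p.eval (𝓕.mi A) ∧
          (hist (n + 1)).length ≤ p.eval (𝓕.mi A)

/-! ### Polynomial mind-changes (PMC) -/

/-- The set of positions at which the hypothesis stream `g` changes its mind. -/
def MindChanges (g : ℕ → ℕ) : Set ℕ := {i | g i ≠ g (i + 1)}

/-- The hypothesis stream `g` changes its mind at most `B` times, and the only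
hypothesis appearing infinitely often in it is an index of `A` in `𝓕`. -/
def PMCCriterion (𝓕 : IndexedFamily) (A : Set ℕ) (g : ℕ → ℕ) (B : ℕ) : Prop :=
  (MindChanges g).Finite ∧ (MindChanges g).ncard ≤ B ∧
    ∀ h, {i | g i = h}.Infinite → 𝓕.F h = A

/-- `𝓕` is PMC-learnable. -/
def PMC (𝓕 : IndexedFamily) : Prop :=
  ∃ (M : Machine) (p : Polynomial ℕ), ∀ A, 𝓕.Mem A → ∀ f, IsEnum f A →
    ∃ g : ℕ → ℕ, (∀ m, M.eval (str f m) = Part.some (g m)) ∧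
      PMCCriterion 𝓕 A g (p.eval (𝓕.mi A))

/-- `𝓕` is PMC[T]-learnable. -/
def PMCT (𝓕 : IndexedFamily) : Prop :=
  ∃ (M : Machine) (T : Teacher) (p : Polynomial ℕ), ∀ A, 𝓕.Mem A → ∀ f, IsEnum f A →
    ∃ g : ℕ → ℕ, (∀ m, M.eval (T.t (str f m)) = Part.some (g m)) ∧
      PMCCriterion 𝓕 A g (p.eval (𝓕.mi A))

/-- `𝓕` is PMC[O]-learnable. -/
def PMCO (𝓕 : IndexedFamily) : Prop :=
  ∃ (M : OMachine) (p : Polynomial ℕ), ∀ A, 𝓕.Mem A → ∀ f, IsEnum f A →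
    ∃ g : ℕ → ℕ,
      (∀ m, ∃ ans, M.Out A (str f m) (g m) ans ∧ ans.length ≤ p.eval (𝓕.mi A)) ∧
      PMCCriterion 𝓕 A g (p.eval (𝓕.mi A))

/-- `𝓕` is PMC[T,O]-learnable. -/
def PMCTO (𝓕 : IndexedFamily) : Prop :=
  ∃ (M : OMachine) (T : OTeacher) (p : Polynomial ℕ),
    ∀ A, 𝓕.Mem A → ∀ f, IsEnum f A →
      ∃ hist : ℕ → List Bool, hist 0 = [] ∧
        ∃ g : ℕ → ℕ,
          (∀ m, M.Out A (T.t (str f m) (hist m)) (g m) (hist (m + 1)) ∧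
            (hist (m + 1)).length ≤ p.eval (𝓕.mi A)) ∧
          PMCCriterion 𝓕 A g (p.eval (𝓕.mi A))

/-! ### Polynomial size characteristic sample (PCS) -/

/-- `𝓕` is PCS-learnable: there are a machine, a polynomial bound and an
assignment of a characteristic sample to each member of `𝓕`. -/
def PCS (𝓕 : IndexedFamily) : Prop :=
  ∃ (M : Machine) (p : Polynomial ℕ) (S : Set ℕ → Finset ℕ),
    ∀ A, 𝓕.Mem A → ↑(S A) ⊆ A ∧ (S A).card < p.eval (𝓕.mi A) ∧
      ∃ e, 𝓕.F e = A ∧ ∀ f, IsEnum f A → ∀ n, (∀ x ∈ S A, x ∈ str f n) →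
        M.eval (str f n) = Part.some e

/-- `𝓕` is PCS[O]-learnable. -/
def PCSO (𝓕 : IndexedFamily) : Prop :=
  ∃ (M : OMachine) (p : Polynomial ℕ) (S : Set ℕ → Finset ℕ),
    ∀ A, 𝓕.Mem A → ↑(S A) ⊆ A ∧ (S A).card < p.eval (𝓕.mi A) ∧
      ∃ e, 𝓕.F e = A ∧ ∀ f, IsEnum f A → ∀ n, (∀ x ∈ S A, x ∈ str f n) →
        ∃ ans, M.Out A (str f n) e ans ∧ ans.length ≤ p.eval (𝓕.mi A)

/-- `𝓕` is PCS[T]-learnable: the characteristic sample must eventually appear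
in the teacher's output stream, after which the learner locks onto a correct
index. -/
def PCST (𝓕 : IndexedFamily) : Prop :=
  ∃ (M : Machine) (T : Teacher) (p : Polynomial ℕ) (S : Set ℕ → Finset ℕ),
    ∀ A, 𝓕.Mem A → ↑(S A) ⊆ A ∧ (S A).card < p.eval (𝓕.mi A) ∧
      ∃ e, 𝓕.F e = A ∧ ∀ f, IsEnum f A →
        (∃ n, ∀ x ∈ S A, x ∈ T.t (str f n)) ∧
        ∀ n, (∀ x ∈ S A, x ∈ T.t (str f n)) → M.eval (T.t (str f n)) = Part.some e

/-- `𝓕` is PCS[T,O]-learnable. -/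
def PCSTO (𝓕 : IndexedFamily) : Prop :=
  ∃ (M : OMachine) (T : OTeacher) (p : Polynomial ℕ) (S : Set ℕ → Finset ℕ),
    ∀ A, 𝓕.Mem A → ↑(S A) ⊆ A ∧ (S A).card < p.eval (𝓕.mi A) ∧
      ∃ e, 𝓕.F e = A ∧ ∀ f, IsEnum f A →
        ∃ hist : ℕ → List Bool, hist 0 = [] ∧
          (∃ n, ∀ x ∈ S A, x ∈ T.t (str f n) (hist n)) ∧
          ∀ n, (∀ x ∈ S A, x ∈ T.t (str f n) (hist n)) →
            M.Out A (T.t (str f n) (hist n)) e (hist (n + 1)) ∧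
            (hist (n + 1)).length ≤ p.eval (𝓕.mi A)



/-! ### Auxiliary constructions for Statement 14 -/

/-- Maximum (with default 0) of a list of naturals. -/
def mx14 (σ : List ℕ) : ℕ := σ.foldr max 0

theorem mx14_primrec : Primrec mx14 :=
  Primrec.list_foldr .id (.const 0) <| Primrec.to₂ <|
    Primrec.nat_max.comp (Primrec.fst.comp .snd) (Primrec.snd.comp .snd)

theorem le_mx14 {x : ℕ} : ∀ {σ : List ℕ}, x ∈ σ → x ≤ mx14 σ := by
  intro σ hx
  induction σ with
  | nil => simp at hx
  | cons a l ih =>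
    rcases List.mem_cons.1 hx with rfl | h
    · exact le_max_left _ _
    · exact le_trans (ih h) (le_max_right _ _)

theorem mx14_le {c : ℕ} : ∀ {σ : List ℕ}, (∀ x ∈ σ, x ≤ c) → mx14 σ ≤ c := by
  intro σ h
  induction σ with
  | nil => simp [mx14]
  | cons a l ih =>
    simp only [mx14, List.foldr_cons]
    exact max_le (h a List.mem_cons_self) (ih fun x hx => h x (List.mem_cons_of_mem _ hx))

theorem mx14_mono {σ τ : List ℕ} (h : σ <+: τ) : mx14 σ ≤ mx14 τ :=
  mx14_le fun x hx => le_mx14 (h.subset hx)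

/-- The transition function of the oracle machine used for Statement 14. -/
def stepF14 (x : List ℕ × List Bool) : ℕ :=
  match x.2.head? with
  | none => 2 * (mx14 x.1 + 1)
  | some b => if b then 1 else 2 * (mx14 x.1 + 1) + 1

theorem stepF14_primrec : Primrec stepF14 := by
  have h1 : Primrec fun x : List ℕ × List Bool => 2 * (mx14 x.1 + 1) :=
    (Primrec.nat_mul.comp (.const 2) (Primrec.succ.comp (mx14_primrec.comp .fst)))
  have := Primrec.option_casesOn (Primrec.list_head?.comp .snd) h1
    (Primrec.to₂ <| Primrec.cond Primrec.snd ((Primrec.const 1).comp .fst)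
      (Primrec.succ.comp (h1.comp Primrec.fst)))
  exact this.of_eq fun x => by
    rcases x with ⟨σ, ans⟩
    rcases ans with _ | ⟨b, t⟩ <;> simp [stepF14]

theorem stepF14_le (x : List ℕ × List Bool) : stepF14 x ≤ 2 * mx14 x.1 + 3 := by
  rcases x with ⟨σ, ans⟩
  rcases ans with _ | ⟨b, t⟩ <;> simp [stepF14] <;> try omega
  cases b <;> simp <;> omega

/-- The oracle machine used for Statement 14. -/
def M14 : OMachine where
  step := fun x => Part.some (stepF14 x)
  partrec := Computable.partrec (Primrec.to_comp stepF14_primrec)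
  time := fun x => Part.some (x.1.length + x.2.length + 2 * mx14 x.1 + 4)
  time_dom := fun x => by simp
  length_le_time := fun x t ht => by
    rw [Part.mem_some_iff] at ht; omega
  queries_le_time := fun x t ht => by
    rw [Part.mem_some_iff] at ht; omega
  size_le_time := fun x t v ht hv => by
    rw [Part.mem_some_iff] at ht hv
    subst hv
    calc Nat.size (stepF14 x) ≤ stepF14 x := Nat.size_le.2 Nat.lt_two_pow_self
      _ ≤ 2 * mx14 x.1 + 3 := stepF14_le x
      _ ≤ t := by omega
  time_mono := fun σ τ a b s t hστ hab hs ht => by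
    simp only at hs ht
    rw [Part.mem_some_iff] at hs ht
    have h1 := hστ.length_le
    have h2 := hab.length_le
    have h3 := mx14_mono hστ
    omega

/-- The indexed family used for Statement 14: `ℕ` together with all initial
segments `{0, …, k}`. -/
def 𝓕14 : IndexedFamily where
  F := fun n => if n = 0 then Set.univ else {x | x < n}
  nonempty := fun n => by
    by_cases h : n = 0
    · exact ⟨0, by simp [h]⟩
    · exact ⟨0, by simp [h, Nat.pos_of_ne_zero h]⟩
  uce := by
    apply ComputablePred.to_re
    rw [ComputablePred.computable_iff]
    refine ⟨fun p => (p.2 == 0) || decide (p.1 < p.2), ?_, ?_⟩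
    · exact Primrec.to_comp <| Primrec.dom_bool₂ _ |>.comp
        (Primrec.beq.comp .snd (.const 0)) (Primrec.nat_lt.comp .fst .snd).decide
    · funext p
      rcases p with ⟨x, n⟩
      by_cases h : n = 0 <;> simp [h]

theorem str_prefix (f : ℕ → ℕ) {n m : ℕ} (h : n ≤ m) : str f n <+: str f m :=
  (List.prefix_iff_eq_take.2 (by simp [List.take_range, h, Nat.min_eq_left])).map f

theorem mem_str {f : ℕ → ℕ} {x n : ℕ} : x ∈ str f n ↔ ∃ i, i < n ∧ f i = x := by
  constructor
  · intro hx
    obtain ⟨i, hi, rfl⟩ := List.mem_map.1 hx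
    exact ⟨i, List.mem_range.1 hi, rfl⟩
  · rintro ⟨i, hi, rfl⟩
    exact List.mem_map.2 ⟨i, List.mem_range.2 hi, rfl⟩

theorem str_content {f : ℕ → ℕ} {A : Set ℕ} (hf : IsEnum f A) {x n : ℕ}
    (hx : x ∈ str f n) : x ∈ A := by
  obtain ⟨i, _, rfl⟩ := mem_str.1 hx
  exact hf ▸ Set.mem_range_self i

/-- The family `𝓕14` is PCS[O]-learnable. -/
theorem pcso14 : PCSO 𝓕14 := by
  refine ⟨M14, Polynomial.C 2, fun A => {sInf {k | k ∈ A ∧ ∀ x ∈ A, x ≤ k}}, ?_⟩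
  intro A hA
  simp only [Polynomial.eval_C]
  obtain ⟨n, hn⟩ := hA
  match n with
  | 0 =>
    have hAu : A = Set.univ := by simpa [𝓕14] using hn.symm
    subst hAu
    have hset : {k : ℕ | k ∈ Set.univ ∧ ∀ x ∈ Set.univ, x ≤ k} = (∅ : Set ℕ) := by
      ext k
      simp only [Set.mem_univ, true_and, Set.mem_setOf_eq, Set.mem_empty_iff_false, iff_false]
      intro hk
      exact absurd (hk (k + 1) trivial) (by omega)
    rw [hset, Nat.sInf_empty]
    refine ⟨by simp, by simp, 0, by simp [𝓕14], ?_⟩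
    intro f hf n' _
    refine ⟨[true], ⟨?_, ?_⟩, by simp⟩
    · have hq : (2 * (mx14 (str f n') + 1)) ∈ M14.step (str f n', []) := by
        simp [M14, stepF14]
      have := OMachine.Reach.query (A := Set.univ) OMachine.Reach.nil hq
      simpa using this
    · simp [M14, stepF14]
  | (k + 1) =>
    have hAk : A = {x | x < k + 1} := by simpa [𝓕14] using hn.symm
    subst hAk
    have hset : {j : ℕ | j ∈ {x | x < k + 1} ∧ ∀ x ∈ {x : ℕ | x < k + 1}, x ≤ j}
        = ({k} : Set ℕ) := by
      ext j
      simp only [Set.mem_setOf_eq, Set.mem_singleton_iff]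
      constructor
      · rintro ⟨h1, h2⟩
        have := h2 k (by omega)
        omega
      · rintro rfl
        exact ⟨by omega, fun x hx => by omega⟩
    rw [hset, csInf_singleton]
    refine ⟨by simp, by simp, k + 1, by simp [𝓕14], ?_⟩
    intro f hf n' hcov
    have hkmem : k ∈ str f n' := hcov k (by simp)
    have hbound : ∀ x ∈ str f n', x ≤ k := fun x hx => by
      have : x < k + 1 := str_content hf hx
      omega
    have hmx : mx14 (str f n') = k := le_antisymm (mx14_le hbound) (le_mx14 hkmem)
    refine ⟨[false], ⟨?_, ?_⟩, by simp⟩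
    · have hq : (2 * (k + 1)) ∈ M14.step (str f n', []) := by
        simp [M14, stepF14, hmx]
      have := OMachine.Reach.query (A := {x : ℕ | x < k + 1}) OMachine.Reach.nil hq
      have hd : decide ((k + 1) ∈ {x : ℕ | x < k + 1}) = false :=
        decide_eq_false (by simp)
      simpa [hd] using this
    · simp [M14, stepF14, hmx]

/-- The family `𝓕14` is not PCS[T]-learnable. -/
theorem not_pcst14 : ¬ PCST 𝓕14 := by
  rintro ⟨M, T, p, S, hP⟩
  have memU : 𝓕14.Mem Set.univ := ⟨0, by simp [𝓕14]⟩
  obtain ⟨-, -, e₀, he₀, hU⟩ := hP Set.univ memU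
  have hidU : IsEnum id Set.univ := Set.range_id
  obtain ⟨N, hN⟩ := (hU id hidU).1
  set A' : Set ℕ := {x | x < N + 1} with hA'def
  have memA' : 𝓕14.Mem A' := ⟨N + 1, by simp [𝓕14, hA'def]⟩
  obtain ⟨-, -, e₁, he₁, hA⟩ := hP A' memA'
  set g : ℕ → ℕ := fun i => i % (N + 1) with hgdef
  have hg : IsEnum g A' := by
    ext x
    constructor
    · rintro ⟨i, rfl⟩
      exact Nat.mod_lt _ (by omega)
    · intro hx
      exact ⟨x, Nat.mod_eq_of_lt hx⟩
  obtain ⟨n₁, hn₁⟩ := (hA g hg).1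
  set m : ℕ := max n₁ N with hmdef
  -- the sample of A' is covered at stage m
  have hcovA : ∀ x ∈ S A', x ∈ T.t (str g m) := fun x hx =>
    (T.mono (str_prefix g (le_max_left _ _))).subset (hn₁ x hx)
  -- the sample of ℕ is covered at stage m
  have hgid : str g N = str id N := by
    apply List.map_congr_left
    intro i hi
    rw [List.mem_range] at hi
    simp [hgdef, Nat.mod_eq_of_lt (by omega : i < N + 1)]
  have hcovU : ∀ x ∈ S Set.univ, x ∈ T.t (str g m) := fun x hx =>
    (T.mono (hgid ▸ str_prefix g (le_max_right _ _))).subset (hN x hx)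
  have h₁ : M.eval (T.t (str g m)) = Part.some e₁ := (hA g hg).2 m hcovA
  -- an enumeration of ℕ extending the string str g m
  set h : ℕ → ℕ := fun i => if i < m then g i else i - m with hhdef
  have hh : IsEnum h Set.univ := by
    rw [IsEnum, Set.range_eq_univ]
    intro y
    exact ⟨y + m, by simp [hhdef]⟩
  have hhg : str h m = str g m := by
    apply List.map_congr_left
    intro i hi
    rw [List.mem_range] at hi
    simp [hhdef, hi]
  have h₂ : M.eval (T.t (str g m)) = Part.some e₀ := by
    have := (hU h hh).2 m (by rw [hhg]; exact hcovU)
    rwa [hhg] at this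
  have he : e₀ = e₁ := by
    have := h₂.symm.trans h₁
    exact Part.some_inj.1 this
  have : (Set.univ : Set ℕ) = A' := he₀.symm.trans (he ▸ he₁)
  have hmem : (N + 1) ∈ A' := this ▸ Set.mem_univ _
  simp only [hA'def, Set.mem_setOf_eq] at hmem
  omega

/-- `PCS[O] \ PCS[T] ≠ ∅`. -/
theorem stmt14 : ∃ 𝓕 : IndexedFamily, PCSO 𝓕 ∧ ¬ PCST 𝓕 := by
  exact ⟨𝓕14, pcso14, not_pcst14⟩

end TeachLearn
end

section
/- The indexed family 𝓖 = {G_n}_{n∈ℕ} with G_0 = ℕ and G_n = [0, n] for n > 0 is PCS[O]-learnable, but no learner–teacher pair PCS[T]-learns 𝓖 (indeed 𝓖 is not PCS[T]-learnable, since every finite string of naturals extends both to an enumeration of ℕ and to an enumeration of some [0, n]). -/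
/-!
Common framework: indexed families of c.e. sets, enumerations (texts),
learning machines with run-time, membership-oracle machines, teachers,
and the learning criteria PRT/PSD/PMC/PCS with oracle/teacher variants.
-/

namespace TeachLearn

attribute [local instance] Classical.propDecidable

/-! ### Auxiliary material for `stmt15` -/

/-- max of a list of naturals -/
def m0 (σ : List ℕ) : ℕ := σ.foldr max 0

lemma m0_cons (a : ℕ) (l : List ℕ) : m0 (a :: l) = max a (m0 l) := rfl

lemma le_m0 {x : ℕ} {σ : List ℕ} (h : x ∈ σ) : x ≤ m0 σ := by
  induction σ with
  | nil => simp at h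
  | cons a l ih =>
    rcases List.mem_cons.1 h with rfl | h'
    · exact le_max_left _ _
    · exact le_trans (ih h') (le_max_right _ _)

lemma m0_le {N : ℕ} {σ : List ℕ} (h : ∀ x ∈ σ, x ≤ N) : m0 σ ≤ N := by
  induction σ with
  | nil => exact Nat.zero_le _
  | cons a l ih =>
    rw [m0_cons]
    exact max_le (h a (by simp)) (ih fun x hx => h x (by simp [hx]))

lemma m0_append (σ τ : List ℕ) : m0 σ ≤ m0 (σ ++ τ) := by
  induction σ with
  | nil => exact Nat.zero_le _
  | cons a l ih =>
    rw [List.cons_append, m0_cons, m0_cons]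
    exact max_le_max le_rfl ih

lemma m0_prefix {σ τ : List ℕ} (h : σ <+: τ) : m0 σ ≤ m0 τ := by
  obtain ⟨r, rfl⟩ := h; exact m0_append σ r

lemma m0_primrec : Primrec m0 := by
  have h : Primrec₂ (fun (_ : List ℕ) (p : ℕ × ℕ) => max p.1 p.2) :=
    (Primrec.nat_max.comp (Primrec.fst.comp Primrec.snd)
      (Primrec.snd.comp Primrec.snd)).to₂
  exact (Primrec.list_foldr Primrec.id (Primrec.const 0) h).of_eq fun l => rfl

/-- the oracle machine's step, as a total function -/
def gstep : List ℕ × List Bool → ℕ := fun x =>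
  match x.2 with
  | [] => 2 * (m0 x.1 + 1)
  | true :: _ => 1
  | false :: _ => 2 * m0 x.1 + 1

lemma gstep_primrec : Primrec gstep := by
  have hg : Primrec (fun x : List ℕ × List Bool => 2 * (m0 x.1 + 1)) :=
    Primrec.nat_mul.comp (Primrec.const 2)
      (Primrec.succ.comp (m0_primrec.comp Primrec.fst))
  have hh : Primrec₂ (fun (x : List ℕ × List Bool) (p : Bool × List Bool) =>
      cond p.1 1 (2 * m0 x.1 + 1)) := by
    have h : Primrec (fun q : (List ℕ × List Bool) × (Bool × List Bool) =>
        cond q.2.1 1 (2 * m0 q.1.1 + 1)) :=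
      Primrec.cond (Primrec.fst.comp Primrec.snd) (Primrec.const 1)
        (Primrec.succ.comp (Primrec.nat_mul.comp (Primrec.const 2)
          (m0_primrec.comp (Primrec.fst.comp Primrec.fst))))
    exact h.to₂
  exact (Primrec.list_casesOn Primrec.snd hg hh).of_eq fun x => by
    rcases x with ⟨σ, _ | ⟨_ | _, l⟩⟩ <;> rfl

lemma size_le_self (n : ℕ) : Nat.size n ≤ n := Nat.size_le.2 (Nat.lt_two_pow_self (n := n))

/-- the oracle machine for statement 15 -/
def theOM : OMachine where
  step := fun x => Part.some (gstep x)
  partrec := gstep_primrec.to_comp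
  time := fun x => Part.some (x.1.length + x.2.length + 2 * m0 x.1 + 2)
  time_dom := fun x => by simp
  length_le_time := by
    intro x t ht
    rw [Part.mem_some_iff] at ht
    omega
  queries_le_time := by
    intro x t ht
    rw [Part.mem_some_iff] at ht
    omega
  size_le_time := by
    intro x t v ht hv
    rw [Part.mem_some_iff] at ht hv
    subst ht hv
    refine le_trans (size_le_self _) ?_
    rcases x with ⟨σ, _ | ⟨_ | _, l⟩⟩ <;> simp [gstep] <;> omega
  time_mono := by
    intro σ τ a b s t hp hab hs ht
    simp only [Part.mem_some_iff] at hs ht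
    have hs' : s = σ.length + a.length + 2 * m0 σ + 2 := hs
    have ht' : t = τ.length + b.length + 2 * m0 τ + 2 := ht
    have h1 := hp.length_le
    have h2 := hab.length_le
    have h3 := m0_prefix hp
    omega

lemma theOM_step (x : List ℕ × List Bool) : theOM.step x = Part.some (gstep x) := rfl

lemma str_prefix_s15 (h : ℕ → ℕ) {a b : ℕ} (hab : a ≤ b) : str h a <+: str h b := by
  have heq : str h a = (str h b).take a := by
    unfold str
    rw [← List.map_take, List.take_range, Nat.min_eq_left hab]
  rw [heq]
  exact List.take_prefix _ _


/-- The indexed family with `G_0 = ℕ` and `G_n = [0, n]` for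
`n > 0` is PCS[O]-learnable but not PCS[T]-learnable. -/
theorem stmt15 (𝓖 : IndexedFamily) (h0 : 𝓖.F 0 = Set.univ)
    (hn : ∀ n, 0 < n → 𝓖.F n = Set.Icc 0 n) :
    PCSO 𝓖 ∧ ¬ PCST 𝓖 := by
  have hpeval : ∀ n : ℕ, (Polynomial.X + Polynomial.C 2 : Polynomial ℕ).eval n = n + 2 := by
    intro n; simp
  constructor
  · -- PCS[O]-learnability
    refine ⟨theOM, Polynomial.X + Polynomial.C 2,
      fun A => if A = Set.univ then ∅ else {𝓖.mi A}, ?_⟩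
    intro A hA
    obtain ⟨k, hk⟩ := hA
    dsimp only
    by_cases hu : A = Set.univ
    · subst hu
      have hmi : 𝓖.mi Set.univ = 0 :=
        Nat.eq_zero_of_le_zero (Nat.sInf_le (show 0 ∈ {n | 𝓖.F n = Set.univ} from h0))
      rw [if_pos rfl]
      refine ⟨by simp, by rw [hmi, hpeval]; norm_num, 0, h0, ?_⟩
      intro f hf n _
      refine ⟨[true], ⟨?_, ?_⟩, by simp only [List.length_singleton]; rw [hmi, hpeval]; omega⟩
      · have hr := OMachine.Reach.query (M := theOM) (A := (Set.univ : Set ℕ))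
          (σ := str f n) (q := m0 (str f n) + 1) OMachine.Reach.nil
          (show (2 * (m0 (str f n) + 1)) ∈ theOM.step (str f n, []) by
            rw [theOM_step]; exact Part.mem_some_iff.2 rfl)
        have hd : @decide ((m0 (str f n) + 1) ∈ (Set.univ : Set ℕ))
            (Classical.propDecidable _) = true :=
          @decide_eq_true _ (Classical.propDecidable _) (Set.mem_univ _)
        rw [hd] at hr
        simpa using hr
      · show (2 * 0 + 1) ∈ theOM.step (str f n, [true])
        rw [theOM_step]
        exact Part.mem_some_iff.2 rfl
    · have hkpos : 0 < k := by
        rcases Nat.eq_zero_or_pos k with rfl | h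
        · exact absurd (hk.symm.trans h0) hu
        · exact h
      have hAeq : A = Set.Icc 0 k := by rw [← hk]; exact hn k hkpos
      have hset : {n | 𝓖.F n = A} = {k} := by
        ext j
        simp only [Set.mem_setOf_eq, Set.mem_singleton_iff]
        constructor
        · intro hFj
          rcases Nat.eq_zero_or_pos j with rfl | hjpos
          · exact absurd (hFj.symm.trans h0) hu
          · rw [hn j hjpos, hAeq] at hFj
            have h1 := Set.ext_iff.1 hFj j
            have h2 := Set.ext_iff.1 hFj k
            simp [Set.mem_Icc] at h1 h2
            omega
        · rintro rfl; exact hk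
      have hmi : 𝓖.mi A = k := by rw [IndexedFamily.mi, hset, csInf_singleton]
      rw [if_neg hu]
      refine ⟨?_, ?_, k, hk, ?_⟩
      · intro x hx
        simp only [Finset.coe_singleton, Set.mem_singleton_iff] at hx
        subst hx
        rw [hmi, hAeq]
        simp
      · rw [hmi, hpeval, Finset.card_singleton]; omega
      · intro f hf n hsamp
        have hmem : k ∈ str f n := by
          have := hsamp (𝓖.mi A) (Finset.mem_singleton_self _)
          rwa [hmi] at this
        have hub : ∀ x ∈ str f n, x ≤ k := by
          intro x hx
          obtain ⟨j, _, rfl⟩ := List.mem_map.1 hx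
          have : f j ∈ A := by rw [← hf]; exact ⟨j, rfl⟩
          rw [hAeq, Set.mem_Icc] at this
          exact this.2
        have hm0 : m0 (str f n) = k := le_antisymm (m0_le hub) (le_m0 hmem)
        refine ⟨[false], ⟨?_, ?_⟩, by simp only [List.length_singleton]; rw [hmi, hpeval]; omega⟩
        · have hr := OMachine.Reach.query (M := theOM) (A := A)
            (σ := str f n) (q := m0 (str f n) + 1) OMachine.Reach.nil
            (show (2 * (m0 (str f n) + 1)) ∈ theOM.step (str f n, []) by
              rw [theOM_step]; exact Part.mem_some_iff.2 rfl)
          have hd : @decide ((m0 (str f n) + 1) ∈ A)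
              (Classical.propDecidable _) = false := by
            apply decide_eq_false
            rw [hm0, hAeq]
            intro hc
            rw [Set.mem_Icc] at hc
            omega
          rw [hd] at hr
          simpa using hr
        · show (2 * k + 1) ∈ theOM.step (str f n, [false])
          rw [theOM_step]
          refine Part.mem_some_iff.2 ?_
          show 2 * k + 1 = 2 * m0 (str f n) + 1
          rw [hm0]
  · -- not PCS[T]-learnable
    rintro ⟨M, T, p, S, hS⟩
    obtain ⟨-, -, e₀, he₀, hf⟩ := hS Set.univ ⟨0, h0⟩
    have hid : IsEnum id Set.univ := Set.range_id
    obtain ⟨n, hn'⟩ := (hf id hid).1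
    set N := n + 1 with hN
    set g : ℕ → ℕ := fun k => if k < n then k else (k - n) % (N + 1) with hg
    have hgle : ∀ k, g k ≤ N := by
      intro k
      by_cases h : k < n
      · simp only [hg, if_pos h]; omega
      · simp only [hg, if_neg h]
        have := Nat.mod_lt (k - n) (show 0 < N + 1 by omega)
        omega
    have hgsurj : ∀ j ≤ N, g (n + j) = j := by
      intro j hj
      simp only [hg, if_neg (show ¬ n + j < n by omega)]
      rw [Nat.add_sub_cancel_left]
      exact Nat.mod_eq_of_lt (by omega)
    have hEnumg : IsEnum g (Set.Icc 0 N) := by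
      unfold IsEnum
      ext x
      simp only [Set.mem_range, Set.mem_Icc]
      constructor
      · rintro ⟨k, rfl⟩; exact ⟨Nat.zero_le _, hgle k⟩
      · rintro ⟨-, hx⟩; exact ⟨n + x, hgsurj x hx⟩
    obtain ⟨-, -, e₁, he₁, hgspec⟩ := hS (Set.Icc 0 N) ⟨N, hn N (by omega)⟩
    obtain ⟨n₁, hn₁⟩ := (hgspec g hEnumg).1
    set m := max n n₁ with hm
    have hstr_id_g : str id n = str g n := by
      unfold str
      refine List.map_congr_left ?_
      intro x hx
      rw [List.mem_range] at hx
      simp [hg, hx]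
    have hsub₀ : ∀ x ∈ S Set.univ, x ∈ T.t (str g m) := by
      intro x hx
      have h1 : x ∈ T.t (str g n) := by rw [← hstr_id_g]; exact hn' x hx
      exact (T.mono (str_prefix_s15 g (le_max_left n n₁))).sublist.subset h1
    have hsub₁ : ∀ x ∈ S (Set.Icc 0 N), x ∈ T.t (str g m) := by
      intro x hx
      exact (T.mono (str_prefix_s15 g (le_max_right n n₁))).sublist.subset (hn₁ x hx)
    set f' : ℕ → ℕ := fun k => if k < m then g k else k - m with hf'
    have hEnumf' : IsEnum f' Set.univ := by
      unfold IsEnum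
      apply Set.eq_univ_of_forall
      intro x
      exact ⟨m + x, by simp only [hf', if_neg (show ¬ m + x < m by omega)]; omega⟩
    have hstrf' : str f' m = str g m := by
      unfold str
      refine List.map_congr_left ?_
      intro x hx
      rw [List.mem_range] at hx
      simp [hf', hx]
    have h₀ : M.eval (T.t (str g m)) = Part.some e₀ := by
      have := (hf f' hEnumf').2 m (by rw [hstrf']; exact hsub₀)
      rwa [hstrf'] at this
    have h₁ : M.eval (T.t (str g m)) = Part.some e₁ := (hgspec g hEnumg).2 m hsub₁
    have hee : e₀ = e₁ := by
      have := h₀.symm.trans h₁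
      exact Part.some_inj.mp this
    have huniv : Set.univ = Set.Icc 0 N := by rw [← he₀, hee, he₁]
    have hmem : (N + 1) ∈ Set.Icc 0 N := by rw [← huniv]; trivial
    rw [Set.mem_Icc] at hmem
    omega


end TeachLearn
end
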